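/- Let (Λ^{(k)})_{k∈ℕ} be a sequence in ℓ¹(ℕ×ℕ) converging in ℓ¹-norm to Λ. Then S(Λ) ⊆ ⋃_{N∈ℕ} ⋂_{k≥N} S(Λ^{(k)}), i.e. every pair (n,m) with α^ν_{n,m}(Λ) > 0 satisfies α^ν_{n,m}(Λ^{(k)}) > 0 for all sufficiently large k. -/

import Mathlib

open scoped BigOperators
open Filter

/-- A set `R ⊆ ℕ` is upward closed w.r.t. the relation `r`. -/
def UpClosed (r : ℕ → ℕ → Prop) (R : Set ℕ) : Prop :=
  ∀ x ∈ R, ∀ y, r x y → y ∈ R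

/-- The family `𝓡_{n,m}` of upward closed sets containing `m` but not `n`. -/
def Rfam (r : ℕ → ℕ → Prop) (n m : ℕ) : Set (Set ℕ) :=
  {R | UpClosed r R ∧ n ∉ R ∧ m ∈ R}

/-- The `l`-th column sum `λ_{*,l}` of a matrix. -/
noncomputable def colSum (Λ : ℕ × ℕ → ℝ) (l : ℕ) : ℝ := ∑' k, Λ (k, l)

/-- Sum of a sequence over a subset of `ℕ`. -/
noncomputable def setSum (f : ℕ → ℝ) (R : Set ℕ) : ℝ := ∑' l : R, f l

/-- `inf_{R ∈ 𝓡_{n,m}} ∑_{l∈R} (ν_l − λ_{*,l})`. -/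
noncomputable def infR (r : ℕ → ℕ → Prop) (ν : ℕ → ℝ) (Λ : ℕ × ℕ → ℝ) (n m : ℕ) : ℝ :=
  sInf ((fun R => setSum (fun l => ν l - colSum Λ l) R) '' Rfam r n m)

open Classical in
/-- The correction term of Nawrotzki's algorithm. -/
noncomputable def alpha (r : ℕ → ℕ → Prop) (ν : ℕ → ℝ) (n m : ℕ) (Λ : ℕ × ℕ → ℝ) : ℝ :=
  if r n m then
    (if 0 < min (colSum Λ n - ν n) (min (ν m - colSum Λ m) (infR r ν Λ n m))
      then min (colSum Λ n - ν n) (min (ν m - colSum Λ m) (infR r ν Λ n m)) else 0)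
  else 0

/-- The Nawrotzki update map `Φ^ν_{n,m}`. -/
noncomputable def Phi (r : ℕ → ℕ → Prop) (ν : ℕ → ℝ) (n m : ℕ) (Λ : ℕ × ℕ → ℝ) :
    ℕ × ℕ → ℝ :=
  fun p => if p = (n, n) then Λ p - alpha r ν n m Λ
    else if p = (n, m) then Λ p + alpha r ν n m Λ
    else Λ p

/-- The set `S(Λ)` of pairs where the correction term is positive. -/
def Sset (r : ℕ → ℕ → Prop) (ν : ℕ → ℝ) (Λ : ℕ × ℕ → ℝ) : Set (ℕ × ℕ) :=
  {p | 0 < alpha r ν p.1 p.2 Λ}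

/-- The diagonal matrix built from a sequence. -/
noncomputable def diagMat (μ : ℕ → ℝ) : ℕ × ℕ → ℝ :=
  fun p => if p.1 = p.2 then μ p.1 else 0

/- ### Auxiliary lemmas -/

private lemma col_inj (l : ℕ) : Function.Injective (fun k : ℕ => (k, l)) :=
  fun _ _ h => (Prod.ext_iff.1 h).1

private lemma col_summable {Λ : ℕ × ℕ → ℝ} (hΛ : Summable fun p => |Λ p|) (l : ℕ) :
    Summable fun k => Λ (k, l) :=
  (hΛ.comp_injective (col_inj l)).of_abs

private lemma swap_summable {Λ : ℕ × ℕ → ℝ} (hΛ : Summable fun p => |Λ p|) :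
    Summable fun q : ℕ × ℕ => |Λ (q.2, q.1)| :=
  ((Equiv.prodComm ℕ ℕ).summable_iff (f := fun p => |Λ p|)).2 hΛ

private lemma colAbs_summable {Λ : ℕ × ℕ → ℝ} (hΛ : Summable fun p => |Λ p|) :
    Summable fun l => ∑' k, |Λ (k, l)| :=
  (swap_summable hΛ).prod

private lemma colAbs_tsum {Λ : ℕ × ℕ → ℝ} (hΛ : Summable fun p => |Λ p|) :
    ∑' l, ∑' k, |Λ (k, l)| = ∑' p, |Λ p| := by
  rw [← Summable.tsum_prod (swap_summable hΛ)]
  exact (Equiv.prodComm ℕ ℕ).tsum_eq (fun p => |Λ p|)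

private lemma abs_colSum_le {Λ : ℕ × ℕ → ℝ} (hΛ : Summable fun p => |Λ p|) (l : ℕ) :
    |colSum Λ l| ≤ ∑' k, |Λ (k, l)| := by
  simpa [colSum, Real.norm_eq_abs] using
    norm_tsum_le_tsum_norm (f := fun k => Λ (k, l))
      (by exact hΛ.comp_injective (col_inj l))

private lemma colSum_abs_summable {Λ : ℕ × ℕ → ℝ} (hΛ : Summable fun p => |Λ p|) :
    Summable fun l => |colSum Λ l| :=
  Summable.of_nonneg_of_le (fun _ => abs_nonneg _) (abs_colSum_le hΛ) (colAbs_summable hΛ)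

private lemma tsum_abs_colSum_le {Λ : ℕ × ℕ → ℝ} (hΛ : Summable fun p => |Λ p|) :
    ∑' l, |colSum Λ l| ≤ ∑' p, |Λ p| := by
  calc ∑' l, |colSum Λ l| ≤ ∑' l, ∑' k, |Λ (k, l)| :=
        Summable.tsum_le_tsum (abs_colSum_le hΛ) (colSum_abs_summable hΛ) (colAbs_summable hΛ)
    _ = ∑' p, |Λ p| := colAbs_tsum hΛ

private lemma abs_setSum_le {f : ℕ → ℝ} (hf : Summable fun l => |f l|) (R : Set ℕ) :
    |setSum f R| ≤ ∑' l, |f l| := by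
  have h1 : |setSum f R| ≤ ∑' l : R, |f l| := by
    simpa [setSum, Real.norm_eq_abs] using
      norm_tsum_le_tsum_norm (f := fun l : R => f l)
        (by exact hf.subtype R)
  exact h1.trans (Summable.tsum_subtype_le (fun l => |f l|) R (fun _ => abs_nonneg _) hf)

private lemma nu_sub_abs_summable {ν : ℕ → ℝ} (hν : Summable fun n => |ν n|)
    {Λ : ℕ × ℕ → ℝ} (hΛ : Summable fun p => |Λ p|) :
    Summable fun l => |ν l - colSum Λ l| :=
  Summable.of_nonneg_of_le (fun _ => abs_nonneg _) (fun l => abs_sub (ν l) (colSum Λ l))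
    (hν.add (colSum_abs_summable hΛ))

private lemma setSum_sub {f g : ℕ → ℝ} (hf : Summable f) (hg : Summable g) (R : Set ℕ) :
    setSum (fun l => f l - g l) R = setSum f R - setSum g R := by
  exact Summable.tsum_sub (hf.subtype R) (hg.subtype R)

/-- The key quantitative estimates. -/
private lemma key_estimates (r : ℕ → ℕ → Prop) (ν : ℕ → ℝ) (hν : Summable fun n => |ν n|)
    {Λ Λ' : ℕ × ℕ → ℝ} (hΛ : Summable fun p => |Λ p|) (hΛ' : Summable fun p => |Λ' p|)
    (n m : ℕ) :
    (∀ l, |colSum Λ' l - colSum Λ l| ≤ ∑' p, |Λ' p - Λ p|) ∧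
    infR r ν Λ n m - ∑' p, |Λ' p - Λ p| ≤ infR r ν Λ' n m := by
  set D : ℕ × ℕ → ℝ := fun p => Λ' p - Λ p with hDdef
  have hD : Summable fun p => |D p| :=
    Summable.of_nonneg_of_le (fun _ => abs_nonneg _) (fun p => abs_sub (Λ' p) (Λ p))
      (hΛ'.add hΛ)
  set ε : ℝ := ∑' p, |D p| with hεdef
  have hεnonneg : 0 ≤ ε := tsum_nonneg fun _ => abs_nonneg _
  have hcolD : ∀ l, colSum Λ' l - colSum Λ l = colSum D l := by
    intro l
    simpa [colSum, hDdef] using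
      (Summable.tsum_sub (col_summable hΛ' l) (col_summable hΛ l)).symm
  have hcolbound : ∀ l, |colSum D l| ≤ ε := by
    intro l
    refine (abs_colSum_le hD l).trans ?_
    exact Summable.tsum_le_tsum_of_inj (fun k : ℕ => (k, l)) (col_inj l)
      (fun c _ => abs_nonneg _) (fun k => le_rfl) (hD.comp_injective (col_inj l)) hD
  refine ⟨fun l => by rw [hcolD l]; exact hcolbound l, ?_⟩
  -- infR estimate
  rcases Set.eq_empty_or_nonempty (Rfam r n m) with hR | hR
  · simp [infR, hR, Real.sInf_empty, hεnonneg]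
  · have himg : ((fun R => setSum (fun l => ν l - colSum Λ' l) R) '' Rfam r n m).Nonempty :=
      hR.image _
    have hfsum : Summable fun l => ν l - colSum Λ l :=
      (nu_sub_abs_summable hν hΛ).of_abs
    have hDsum : Summable (colSum D) := (colSum_abs_summable hD).of_abs
    have hbdd : BddBelow ((fun R => setSum (fun l => ν l - colSum Λ l) R) '' Rfam r n m) := by
      refine ⟨-(∑' l, |ν l - colSum Λ l|), ?_⟩
      rintro x ⟨R, -, rfl⟩
      have := abs_setSum_le (nu_sub_abs_summable hν hΛ) R
      linarith [neg_abs_le (setSum (fun l => ν l - colSum Λ l) R)]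
    have hgoal : infR r ν Λ n m - ε ≤
        sInf ((fun R => setSum (fun l => ν l - colSum Λ' l) R) '' Rfam r n m) := by
      refine le_csInf himg ?_
      rintro x ⟨R, hRmem, rfl⟩
      have heq : setSum (fun l => ν l - colSum Λ' l) R
          = setSum (fun l => ν l - colSum Λ l) R - setSum (colSum D) R := by
        rw [← setSum_sub hfsum hDsum R]
        congr 1
        funext l
        rw [← hcolD l]; ring
      have h1 : |setSum (colSum D) R| ≤ ε := by
        refine (abs_setSum_le (colSum_abs_summable hD) R).trans ?_
        exact tsum_abs_colSum_le hD
      have h2 : infR r ν Λ n m ≤ setSum (fun l => ν l - colSum Λ l) R :=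
        csInf_le hbdd ⟨R, hRmem, rfl⟩
      simp only []
      rw [heq]
      have := abs_le.1 h1
      linarith
    simpa [infR] using hgoal

theorem Sset_limit_subset (r : ℕ → ℕ → Prop)
    (ν : ℕ → ℝ) (hν : Summable fun n => |ν n|)
    (Ls : ℕ → ℕ × ℕ → ℝ) (Λ : ℕ × ℕ → ℝ)
    (hs : ∀ k, Summable fun p => |Ls k p|)
    (hΛ : Summable fun p => |Λ p|)
    (hconv : Tendsto (fun k => ∑' p, |Ls k p - Λ p|) atTop (nhds 0)) :
    ∀ p ∈ Sset r ν Λ, ∃ N, ∀ k ≥ N, p ∈ Sset r ν (Ls k) := by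
  rintro ⟨n, m⟩ hp
  simp only [Sset, Set.mem_setOf_eq, alpha] at hp ⊢
  by_cases hr : r n m
  swap
  · rw [if_neg hr] at hp; exact absurd hp (lt_irrefl 0)
  rw [if_pos hr] at hp
  set α := min (colSum Λ n - ν n) (min (ν m - colSum Λ m) (infR r ν Λ n m)) with hα
  have hpos : 0 < α := by
    by_contra h
    rw [if_neg h] at hp
    exact absurd hp (lt_irrefl 0)
  have hev : ∀ᶠ k in atTop, ∑' p, |Ls k p - Λ p| < α := hconv.eventually (gt_mem_nhds hpos)
  obtain ⟨N, hN⟩ := eventually_atTop.1 hev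
  refine ⟨N, fun k hk => ?_⟩
  set ε : ℝ := ∑' p, |Ls k p - Λ p| with hεdef
  have hεlt : ε < α := hN k hk
  obtain ⟨hcol, hinf⟩ := key_estimates r ν hν hΛ (hs k) n m
  have h1 : α ≤ colSum Λ n - ν n := min_le_left _ _
  have h2 : α ≤ ν m - colSum Λ m := le_trans (min_le_right _ _) (min_le_left _ _)
  have h3 : α ≤ infR r ν Λ n m := le_trans (min_le_right _ _) (min_le_right _ _)
  have hcn := abs_le.1 (hcol n)
  have hcm := abs_le.1 (hcol m)
  have hmin : 0 < min (colSum (Ls k) n - ν n)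
      (min (ν m - colSum (Ls k) m) (infR r ν (Ls k) n m)) := by
    refine lt_min (by linarith [hcn.1, hcn.2]) (lt_min (by linarith [hcm.1, hcm.2]) ?_)
    linarith
  rw [if_pos hr, if_pos hmin]
  exact hmin
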